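/- Let k ≥ 1 be an integer and ε = ±1, and consider the elliptic curves over ℚ given by E¹_k : y² + (1 − ε5ᵏ)xy − ε5ᵏy = x³ − ε5ᵏx² and E²_k : y² + (ε5ᵏ − 1)xy − 5^{2k}y = x³ − ε5ᵏx². Then: (i) the discriminant of E¹_k is Δ(E¹_k) = ε·5^{5k}·(5^{2k} − 11ε5ᵏ − 1) and its c₄-invariant is c₄(E¹_k) = 1 + 12ε5ᵏ + 14·5^{2k} − 12ε5^{3k} + 5^{4k}; in particular ν₅(Δ(Eⁱ_k)) = 5k and ν₅(c₄(Eⁱ_k)) = 0 for i = 1, 2, so that Eⁱ_k has (split) multiplicative reduction of Kodaira type I_{5k} at 5; (ii) for i = 1, 2 and every prime ℓ ≠ 5, ℓ does not divide both c₄(Eⁱ_k) and Δ(Eⁱ_k); consequently Eⁱ_k has no primes of additive reduction. -/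
import Mathlib


/-!
STATEMENT 6: For `k ≥ 1` and `ε = ±1`, consider the elliptic curves over `ℚ` (given here by
integral Weierstrass models)
`E¹_k : y² + (1 − ε5ᵏ)xy − ε5ᵏy = x³ − ε5ᵏx²` and
`E²_k : y² + (ε5ᵏ − 1)xy − 5^{2k}y = x³ − ε5ᵏx²`.
(i) `Δ(E¹_k) = ε·5^{5k}·(5^{2k} − 11ε5ᵏ − 1)`,
`c₄(E¹_k) = 1 + 12ε5ᵏ + 14·5^{2k} − 12ε5^{3k} + 5^{4k}`; in particular
`ν₅(Δ(Eⁱ_k)) = 5k` and `ν₅(c₄(Eⁱ_k)) = 0` for `i = 1, 2`, so `Eⁱ_k` has (split)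
multiplicative reduction of Kodaira type `I_{5k}` at `5` (multiplicative of type `I_n` at `ℓ`
meaning `ν_ℓ(Δ) = n > 0` and `ν_ℓ(c₄) = 0`).
(ii) For `i = 1, 2` and every prime `ℓ ≠ 5`, `ℓ` does not divide both `c₄(Eⁱ_k)` and
`Δ(Eⁱ_k)`; consequently (additive reduction at `ℓ` meaning exactly that `ℓ` divides both `c₄`
and `Δ`) `Eⁱ_k` has no primes of additive reduction.
-/

open WeierstrassCurve

/-- The integral model `E¹_k : y² + (1 − ε5ᵏ)xy − ε5ᵏy = x³ − ε5ᵏx²`. -/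
def E1 (k : ℕ) (ε : ℤ) : WeierstrassCurve ℤ :=
  ⟨1 - ε * 5 ^ k, -(ε * 5 ^ k), -(ε * 5 ^ k), 0, 0⟩

/-- The integral model `E²_k : y² + (ε5ᵏ − 1)xy − 5^{2k}y = x³ − ε5ᵏx²`. -/
def E2 (k : ℕ) (ε : ℤ) : WeierstrassCurve ℤ :=
  ⟨ε * 5 ^ k - 1, -(ε * 5 ^ k), -(5 ^ (2 * k)), 0, 0⟩

lemma val_aux (N : ℕ) (ε m : ℤ) (hε : ε = 1 ∨ ε = -1) (hm : ¬(5:ℤ) ∣ m) :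
    padicValInt 5 (ε * 5 ^ N * m) = N := by
  haveI : Fact (Nat.Prime 5) := ⟨by norm_num⟩
  have hm0 : m.natAbs ≠ 0 := by
    simp only [ne_eq, Int.natAbs_eq_zero]
    rintro rfl; exact hm (dvd_zero _)
  have hmn : ¬ (5:ℕ) ∣ m.natAbs := fun h => hm (Int.natAbs_dvd_natAbs.mp (by simpa using h))
  have h1 : padicValInt 5 (ε * 5 ^ N * m) = padicValNat 5 (5 ^ N * m.natAbs) := by
    rcases hε with rfl | rfl <;>
      simp [padicValInt, Int.natAbs_mul, Int.natAbs_pow]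
  rw [h1, padicValNat.mul (by positivity) hm0, padicValNat.prime_pow,
    padicValNat.eq_zero_of_not_dvd hmn, Nat.add_zero]

lemma not_five_dvd (c w : ℤ) (h : c = 1 + 5 * w) : ¬(5:ℤ) ∣ c := by
  intro hd; rw [h] at hd; omega

lemma no_common (c d : ℤ) (N : ℕ) (h5 : ¬(5:ℤ) ∣ c) (u v : ℤ)
    (hcomb : u * c + v * d = 5 ^ N) :
    ∀ ℓ : ℕ, ℓ.Prime → ¬((ℓ:ℤ) ∣ c ∧ (ℓ:ℤ) ∣ d) := by
  rintro ℓ hℓ ⟨h1, h2⟩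
  have hdvd : (ℓ:ℤ) ∣ 5 ^ N := hcomb ▸ dvd_add (h1.mul_left u) (h2.mul_left v)
  have hdn : ℓ ∣ 5 ^ N := by
    have := Int.natAbs_dvd_natAbs.mpr hdvd
    simpa [Int.natAbs_pow] using this
  have hℓ5 : ℓ = 5 :=
    (Nat.prime_dvd_prime_iff_eq hℓ (by norm_num)).mp (hℓ.dvd_of_dvd_pow hdn)
  exact h5 (by exact_mod_cast hℓ5 ▸ h1)

theorem stmt_6 (k : ℕ) (hk : 1 ≤ k) (ε : ℤ) (hε : ε = 1 ∨ ε = -1) :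
    -- (i)
    ((E1 k ε).Δ = ε * 5 ^ (5 * k) * (5 ^ (2 * k) - 11 * ε * 5 ^ k - 1) ∧
     (E1 k ε).c₄ = 1 + 12 * ε * 5 ^ k + 14 * 5 ^ (2 * k) - 12 * ε * 5 ^ (3 * k) + 5 ^ (4 * k) ∧
     padicValInt 5 (E1 k ε).Δ = 5 * k ∧ padicValInt 5 (E1 k ε).c₄ = 0 ∧
     padicValInt 5 (E2 k ε).Δ = 5 * k ∧ padicValInt 5 (E2 k ε).c₄ = 0) ∧
    -- (ii)
    ((∀ ℓ : ℕ, ℓ.Prime → ℓ ≠ 5 →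
        ¬((ℓ : ℤ) ∣ (E1 k ε).c₄ ∧ (ℓ : ℤ) ∣ (E1 k ε).Δ) ∧
        ¬((ℓ : ℤ) ∣ (E2 k ε).c₄ ∧ (ℓ : ℤ) ∣ (E2 k ε).Δ)) ∧
     (∀ ℓ : ℕ, ℓ.Prime →
        ¬((ℓ : ℤ) ∣ (E1 k ε).c₄ ∧ (ℓ : ℤ) ∣ (E1 k ε).Δ) ∧
        ¬((ℓ : ℤ) ∣ (E2 k ε).c₄ ∧ (ℓ : ℤ) ∣ (E2 k ε).Δ))) := by
  obtain ⟨j, rfl⟩ : ∃ j, k = j + 1 := ⟨k - 1, by omega⟩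
  set k := j + 1 with hkdef
  -- basic formulas
  have hε2 : ε ^ 2 = 1 := by rcases hε with rfl | rfl <;> norm_num
  have hΔ1 : (E1 k ε).Δ = ε * 5 ^ (5 * k) * (5 ^ (2 * k) - 11 * ε * 5 ^ k - 1) := by
    simp only [E1, WeierstrassCurve.Δ, b₂, b₄, b₆, b₈]
    rcases hε with rfl | rfl <;> ring
  have hc1 : (E1 k ε).c₄ =
      1 + 12 * ε * 5 ^ k + 14 * 5 ^ (2 * k) - 12 * ε * 5 ^ (3 * k) + 5 ^ (4 * k) := by
    simp only [E1, c₄, b₂, b₄]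
    rcases hε with rfl | rfl <;> ring
  have hΔ2 : (E2 k ε).Δ = (-ε) * 5 ^ (5 * k) * (5 ^ (2 * k) + 11 * ε * 5 ^ k - 1) := by
    simp only [E2, WeierstrassCurve.Δ, b₂, b₄, b₆, b₈]
    rcases hε with rfl | rfl <;> ring
  have hc2 : (E2 k ε).c₄ =
      1 - 12 * ε * 5 ^ k + 14 * 5 ^ (2 * k) + 12 * ε * 5 ^ (3 * k) + 5 ^ (4 * k) := by
    simp only [E2, c₄, b₂, b₄]
    rcases hε with rfl | rfl <;> ring
  -- 5 does not divide the c₄'s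
  have h5c1 : ¬(5:ℤ) ∣ (E1 k ε).c₄ := by
    refine not_five_dvd _ (12 * ε * 5 ^ j + 14 * 5 ^ (2 * j + 1) - 12 * ε * 5 ^ (3 * j + 2)
      + 5 ^ (4 * j + 3)) ?_
    rw [hc1]; ring
  have h5c2 : ¬(5:ℤ) ∣ (E2 k ε).c₄ := by
    refine not_five_dvd _ (-(12 * ε * 5 ^ j) + 14 * 5 ^ (2 * j + 1) + 12 * ε * 5 ^ (3 * j + 2)
      + 5 ^ (4 * j + 3)) ?_
    rw [hc2]; ring
  -- 5 does not divide the cofactors of the discriminants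
  have h5m1 : ¬(5:ℤ) ∣ (5 ^ (2 * k) - 11 * ε * 5 ^ k - 1) := by
    intro h
    have : (5:ℤ) ∣ (5 * (5 ^ (2 * j + 1) - 11 * ε * 5 ^ j) - 1) := by
      convert h using 2; ring
    omega
  have h5m2 : ¬(5:ℤ) ∣ (5 ^ (2 * k) + 11 * ε * 5 ^ k - 1) := by
    intro h
    have : (5:ℤ) ∣ (5 * (5 ^ (2 * j + 1) + 11 * ε * 5 ^ j) - 1) := by
      convert h using 2; ring
    omega
  -- Bézout combinations : u·c₄ + v·Δ = 5^(5k+1)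
  have key1 : ∀ ℓ : ℕ, ℓ.Prime → ¬((ℓ:ℤ) ∣ (E1 k ε).c₄ ∧ (ℓ:ℤ) ∣ (E1 k ε).Δ) := by
    rcases hε with rfl | rfl
    · refine no_common _ _ (5 * k + 1) h5c1
        ((122 - 11 * 5 ^ k) * 5 ^ (5 * k))
        (117 + 166 * 5 ^ k - 133 * 5 ^ (2 * k) + 11 * 5 ^ (3 * k)) ?_
      rw [hc1, hΔ1]; ring
    · refine no_common _ _ (5 * k + 1) h5c1
        ((122 + 11 * 5 ^ k) * 5 ^ (5 * k))
        (-(117 - 166 * 5 ^ k - 133 * 5 ^ (2 * k) - 11 * 5 ^ (3 * k))) ?_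
      rw [hc1, hΔ1]; ring
  have key2 : ∀ ℓ : ℕ, ℓ.Prime → ¬((ℓ:ℤ) ∣ (E2 k ε).c₄ ∧ (ℓ:ℤ) ∣ (E2 k ε).Δ) := by
    rcases hε with rfl | rfl
    · refine no_common _ _ (5 * k + 1) h5c2
        ((122 + 11 * 5 ^ k) * 5 ^ (5 * k))
        (-117 + 166 * 5 ^ k + 133 * 5 ^ (2 * k) + 11 * 5 ^ (3 * k)) ?_
      rw [hc2, hΔ2]; ring
    · refine no_common _ _ (5 * k + 1) h5c2
        ((122 - 11 * 5 ^ k) * 5 ^ (5 * k))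
        (117 + 166 * 5 ^ k - 133 * 5 ^ (2 * k) + 11 * 5 ^ (3 * k)) ?_
      rw [hc2, hΔ2]; ring
  refine ⟨⟨hΔ1, hc1, ?_, padicValInt.eq_zero_of_not_dvd h5c1, ?_,
      padicValInt.eq_zero_of_not_dvd h5c2⟩,
    fun ℓ hℓ _ => ⟨key1 ℓ hℓ, key2 ℓ hℓ⟩, fun ℓ hℓ => ⟨key1 ℓ hℓ, key2 ℓ hℓ⟩⟩
  · rw [hΔ1]; exact val_aux _ _ _ hε h5m1
  · rw [hΔ2]
    refine val_aux _ _ _ ?_ h5m2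
    rcases hε with rfl | rfl <;> norm_num
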